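/- For every real number R that is not an integer and every natural number j, the sequence N ↦ ∑_{k=0}^{N} (-1)^k C(R,k) k^j is asymptotically equivalent, as N tends to infinity, to N ↦ (-1)^N · (R/(R-j)) · C(R-1, N) · N^j; that is, the ratio of the two sides tends to 1. -/

import Mathlib

open Finset Filter Real

/-- Generalized binomial coefficient C(R,k) = R(R-1)⋯(R-k+1)/k! for real R and natural k. -/
noncomputable def genBinom (R : ℝ) (k : ℕ) : ℝ :=
  (∏ i ∈ Finset.range k, (R - i)) / (Nat.factorial k)

lemma genBinom_ne_zero {R : ℝ} (hR : ∀ n : ℤ, R ≠ (n : ℝ)) (k : ℕ) : genBinom R k ≠ 0 := by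
  unfold genBinom
  apply div_ne_zero
  · exact Finset.prod_ne_zero_iff.2 fun i _ => sub_ne_zero.2 (by exact_mod_cast hR i)
  · exact_mod_cast (Nat.factorial_pos k).ne'

lemma hR_shift {R : ℝ} (hR : ∀ n : ℤ, R ≠ (n : ℝ)) : ∀ n : ℤ, R - 1 ≠ (n : ℝ) := by
  intro n h
  exact hR (n + 1) (by push_cast; linarith)

-- C(R,k+1)*(k+1) = R * C(R-1,k)
lemma genBinom_succ_mul (R : ℝ) (k : ℕ) :
    genBinom R (k + 1) * (k + 1) = R * genBinom (R - 1) k := by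
  unfold genBinom
  have h1 : ∏ i ∈ range (k+1), (R - i) = R * ∏ i ∈ range k, (R - 1 - i) := by
    rw [Finset.prod_range_succ' (fun i => R - (i:ℝ))]
    simp only [Nat.cast_zero, sub_zero, mul_comm]
    congr 1
    exact Finset.prod_congr rfl fun i _ => by push_cast; ring
  rw [h1, Nat.factorial_succ]
  have hk : ((k:ℝ)+1) ≠ 0 := by positivity
  have hf : ((Nat.factorial k : ℝ)) ≠ 0 := by exact_mod_cast (Nat.factorial_pos k).ne'
  field_simp
  push_cast
  ring

-- Pascal: C(R,k+1) = C(R-1,k+1) + C(R-1,k)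
lemma genBinom_pascal (R : ℝ) (k : ℕ) :
    genBinom R (k + 1) = genBinom (R - 1) (k + 1) + genBinom (R - 1) k := by
  unfold genBinom
  have h1 : ∏ i ∈ range (k+1), (R - 1 - i) = (∏ i ∈ range k, (R - 1 - i)) * (R - 1 - k) := Finset.prod_range_succ _ _
  have h2 : ∏ i ∈ range (k+1), (R - i) = R * ∏ i ∈ range k, (R - 1 - i) := by
    rw [Finset.prod_range_succ' (fun i => R - (i:ℝ))]
    simp only [Nat.cast_zero, sub_zero, mul_comm]
    congr 1
    exact Finset.prod_congr rfl fun i _ => by push_cast; ring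
  rw [h1, h2, Nat.factorial_succ]
  have hk : ((k:ℝ)+1) ≠ 0 := by positivity
  have hf : ((Nat.factorial k : ℝ)) ≠ 0 := by exact_mod_cast (Nat.factorial_pos k).ne'
  push_cast
  field_simp
  ring

-- j = 0 identity
lemma sum_alt_genBinom (R : ℝ) (N : ℕ) :
    ∑ k ∈ range (N + 1), (-1 : ℝ) ^ k * genBinom R k = (-1 : ℝ) ^ N * genBinom (R - 1) N := by
  induction N with
  | zero => simp [genBinom]
  | succ n ih =>
    rw [Finset.sum_range_succ, ih, genBinom_pascal]
    ring

noncomputable def Salt (R : ℝ) (j N : ℕ) : ℝ :=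
  ∑ k ∈ Finset.range (N + 1), (-1 : ℝ) ^ k * genBinom R k * (k : ℝ) ^ j

noncomputable def Talt (R : ℝ) (j N : ℕ) : ℝ :=
  (-1 : ℝ) ^ N * (R / (R - j)) * genBinom (R - 1) N * (N : ℝ) ^ j

lemma Salt_succ (R : ℝ) (j M : ℕ) :
    Salt R (j + 1) (M + 1) = -R * ∑ i ∈ range (j + 1), (j.choose i : ℝ) * Salt (R - 1) i M := by
  unfold Salt
  rw [Finset.sum_range_succ' (fun k => (-1 : ℝ) ^ k * genBinom R k * (k : ℝ) ^ (j+1)) (M+1)]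
  simp only [Nat.cast_zero, zero_pow (Nat.succ_ne_zero j), mul_zero, add_zero]
  have step1 : ∀ k : ℕ, (-1 : ℝ) ^ (k+1) * genBinom R (k+1) * ((k+1 : ℕ) : ℝ) ^ (j+1)
      = -R * ((-1 : ℝ) ^ k * genBinom (R-1) k * ((k:ℝ)+1) ^ j) := by
    intro k
    push_cast
    linear_combination ((-1:ℝ)^(k+1) * ((k:ℝ)+1)^j) * genBinom_succ_mul R k
  simp only [step1]
  rw [← Finset.mul_sum]
  congr 1
  have step2 : ∀ k : ℕ, (-1 : ℝ) ^ k * genBinom (R-1) k * ((k:ℝ)+1) ^ j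
      = ∑ i ∈ range (j+1), (j.choose i : ℝ) * ((-1:ℝ)^k * genBinom (R-1) k * (k:ℝ)^i) := by
    intro k
    rw [add_pow (k:ℝ) 1 j, Finset.mul_sum]
    exact Finset.sum_congr rfl fun i _ => by ring
  simp only [step2]
  rw [Finset.sum_comm]
  exact Finset.sum_congr rfl fun i _ => by rw [Finset.mul_sum]

lemma Talt_ne_zero {R : ℝ} (hR : ∀ n : ℤ, R ≠ (n : ℝ)) (j N : ℕ) (hN : (N:ℝ)^j ≠ 0) :
    Talt R j N ≠ 0 := by
  unfold Talt
  have hR0 : R ≠ 0 := by simpa using hR 0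
  have hRj : R - j ≠ 0 := sub_ne_zero.2 (by exact_mod_cast hR j)
  exact mul_ne_zero (mul_ne_zero (mul_ne_zero (pow_ne_zero _ (by norm_num))
    (div_ne_zero hR0 hRj)) (genBinom_ne_zero (hR_shift hR) N)) hN

lemma Talt_ratio {R : ℝ} (hR : ∀ n : ℤ, R ≠ (n : ℝ)) (i j M : ℕ) :
    Talt (R - 1) i M / Talt R (j + 1) (M + 1) =
      -((R - ((j:ℝ) + 1)) / (R * (R - 1 - i))) * ((M : ℝ) ^ i / ((M : ℝ) + 1) ^ j) := by
  have hR0 : R ≠ 0 := by simpa using hR 0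
  have hR1 : R - 1 ≠ 0 := sub_ne_zero.2 (by exact_mod_cast hR 1)
  have hRj : R - ((j:ℝ) + 1) ≠ 0 := by
    have := hR ((j:ℤ) + 1); intro h; apply this; push_cast at h ⊢; linarith
  have hRi : R - 1 - (i:ℝ) ≠ 0 := by
    have := hR ((i:ℤ) + 1); intro h; apply this; push_cast at h ⊢; linarith
  have hM1 : ((M:ℝ) + 1) ≠ 0 := by positivity
  have hG2 : genBinom (R - 1 - 1) M ≠ 0 := genBinom_ne_zero (hR_shift (hR_shift hR)) M
  have hG : genBinom (R - 1) (M + 1) = (R - 1) * genBinom (R - 1 - 1) M / ((M:ℝ) + 1) := by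
    rw [eq_div_iff hM1]; exact genBinom_succ_mul (R - 1) M
  unfold Talt
  rw [hG]
  push_cast
  have hneg : ((-1:ℝ)) ^ (M + 1) = -(-1:ℝ)^M := by rw [pow_succ]; ring
  rw [hneg]
  have hpow : (-1:ℝ)^M ≠ 0 := pow_ne_zero _ (by norm_num)
  field_simp
  ring

lemma tendsto_pow_ratio (i j : ℕ) (hij : i ≤ j) :
    Tendsto (fun M : ℕ => (M:ℝ)^i / ((M:ℝ)+1)^j) atTop (nhds (if i = j then 1 else 0)) := by
  have h1 : Tendsto (fun M : ℕ => ((M:ℝ)/((M:ℝ)+1))^i * (1/((M:ℝ)+1))^(j-i)) atTop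
      (nhds ((1:ℝ)^i * (0:ℝ)^(j-i))) :=
    ((tendsto_natCast_div_add_atTop (1:ℝ)).pow i).mul
      (tendsto_one_div_add_atTop_nhds_zero_nat.pow (j-i))
  have heq : ∀ M : ℕ, ((M:ℝ)/((M:ℝ)+1))^i * (1/((M:ℝ)+1))^(j-i) = (M:ℝ)^i/((M:ℝ)+1)^j := by
    intro M
    rw [div_pow, div_pow, one_pow, div_mul_div_comm, ← pow_add, Nat.add_sub_cancel' hij]
    ring
  have hconst : (1:ℝ)^i * (0:ℝ)^(j-i) = if i = j then 1 else 0 := by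
    rw [one_pow, one_mul, zero_pow_eq]
    rcases eq_or_lt_of_le hij with rfl | h
    · simp
    · rw [if_neg (by omega : ¬ j - i = 0), if_neg (by omega : ¬ i = j)]
  rw [hconst] at h1
  exact h1.congr heq

lemma main_aux : ∀ j : ℕ, ∀ R : ℝ, (∀ n : ℤ, R ≠ (n : ℝ)) →
    Tendsto (fun N : ℕ => Salt R j N / Talt R j N) atTop (nhds 1) := by
  intro j
  induction j using Nat.strong_induction_on with
  | _ j ih =>
    intro R hR
    have hR0 : R ≠ 0 := by simpa using hR 0
    match j with
    | 0 =>
      have heq : ∀ N : ℕ, Salt R 0 N / Talt R 0 N = 1 := by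
        intro N
        unfold Salt Talt
        simp only [pow_zero, mul_one, Nat.cast_zero, sub_zero]
        rw [sum_alt_genBinom, div_self hR0, mul_one]
        exact div_self (mul_ne_zero (pow_ne_zero _ (by norm_num))
          (genBinom_ne_zero (hR_shift hR) N))
      simp only [heq]
      exact tendsto_const_nhds
    | j + 1 =>
      rw [← tendsto_add_atTop_iff_nat 1]
      have hRj : R - ((j:ℝ) + 1) ≠ 0 := by
        have := hR ((j:ℤ) + 1); intro h; apply this; push_cast at h ⊢; linarith
      have hlim : Tendsto (fun M : ℕ =>
        -R * ∑ i ∈ range (j + 1), (j.choose i : ℝ) * (Salt (R-1) i M / Talt (R-1) i M) *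
          (-((R - ((j:ℝ) + 1)) / (R * (R - 1 - i))) * ((M : ℝ) ^ i / ((M : ℝ) + 1) ^ j))) atTop (nhds
          (-R * ∑ i ∈ range (j + 1), (j.choose i : ℝ) * 1 *
            (-((R - ((j:ℝ) + 1)) / (R * (R - 1 - i))) * (if i = j then 1 else 0)))) := by
        apply Tendsto.const_mul
        apply tendsto_finset_sum
        intro i hi
        have hi' : i ≤ j := Nat.lt_succ_iff.mp (Finset.mem_range.mp hi)
        exact ((tendsto_const_nhds.mul (ih i (Nat.lt_succ_of_le hi') (R-1) (hR_shift hR))).mul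
          (tendsto_const_nhds.mul (tendsto_pow_ratio i j hi')))
      have hconst : (-R * ∑ i ∈ range (j + 1), (j.choose i : ℝ) * 1 *
          (-((R - ((j:ℝ) + 1)) / (R * (R - 1 - i))) * (if i = j then 1 else 0))) = 1 := by
        rw [Finset.sum_eq_single j (fun b _ hbj => by simp [hbj])
          (fun h => absurd (Finset.self_mem_range_succ j) h)]
        have h1 : R - 1 - (j:ℝ) = R - ((j:ℝ) + 1) := by ring
        rw [h1]
        simp only [Nat.choose_self, Nat.cast_one, if_pos rfl, ↓reduceIte, one_mul, mul_one]
        field_simp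
      rw [hconst] at hlim
      apply hlim.congr'
      filter_upwards [eventually_ge_atTop 1] with M hM
      have hT : Talt R (j+1) (M+1) ≠ 0 :=
        Talt_ne_zero hR (j+1) (M+1) (pow_ne_zero _ (by positivity))
      have hM0 : ((M:ℝ)) ≠ 0 := Nat.cast_ne_zero.2 (by omega)
      symm
      rw [Salt_succ, mul_div_assoc, Finset.sum_div]
      congr 1
      refine Finset.sum_congr rfl fun i hi => ?_
      have hTi : Talt (R-1) i M ≠ 0 :=
        Talt_ne_zero (hR_shift hR) i M (pow_ne_zero _ hM0)
      rw [← Talt_ratio hR i j M]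
      field_simp

/-- For non-integer real R and natural j, as N → ∞,
    ∑_{k=0}^{N} (-1)^k C(R,k) k^j ∼ (-1)^N (R/(R-j)) C(R-1,N) N^j: the ratio tends to 1.
    (Here 0^0 = 1 by the convention of natural number powers.) -/
theorem alternating_sum_pow_asymptotic (R : ℝ) (hR : ∀ n : ℤ, R ≠ (n : ℝ)) (j : ℕ) :
    Filter.Tendsto
      (fun N : ℕ =>
        (∑ k ∈ Finset.range (N + 1), (-1 : ℝ) ^ k * genBinom R k * (k : ℝ) ^ j)
          / ((-1 : ℝ) ^ N * (R / (R - j)) * genBinom (R - 1) N * (N : ℝ) ^ j))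
      Filter.atTop (nhds 1) := by
  exact main_aux j R hR
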